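/- Let Σ be an alphabet of size k. There exists a (k, 0)-BAPO solving SetDiff: the prefix oracle transmits a k-bit string indicating, for each alphabet symbol, whether (as far as the prefix reveals) it occurs in the first part of the input but not in the second, and this suffices for the suffix oracle to always output a correct answer. -/

import Mathlib

open Finset Filter Asymptotics

/-- An `(a, b)`-BAPO (bounded attention prefix oracle): a prefix oracle `f` outputting
`a` bits, a binary attention function `g`, and a suffix oracle `h` that receives the
prefix-oracle output, an attended set of at most `b` (token, 1-based index) pairs from
the prefix, the suffix, and the split index. -/
structure BAPO (Sigma : Type) (Out : Type) (a b : ℕ) where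
  f : List Sigma → (Fin a → Bool)
  g : List Sigma → ℕ → Sigma → ℕ → Bool
  h : (Fin a → Bool) → Finset (Sigma × ℕ) → List Sigma → ℕ → Out

namespace BAPO

variable {Sigma Out : Type} {a b : ℕ}

/-- The set `𝔾 = {(xᵢ, i) : 1 ≤ i ≤ k, g(suffix, k, xᵢ, i) = 1}` of attended
candidates for a given prefix and suffix. -/
noncomputable def cands (M : BAPO Sigma Out a b) (pre suf : List Sigma) :
    Finset (Sigma × ℕ) :=
  letI := Classical.decEq Sigma
  (Finset.univ.filter fun i : Fin pre.length =>
      M.g suf pre.length (pre.get i) ((i : ℕ) + 1) = true).image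
    fun i => (pre.get i, (i : ℕ) + 1)

/-- The BAPO outputs `y` on input `x`: for every split index `k < |x|` and every
attended set `G ⊆ 𝔾` with `|G| = min b |𝔾|`, the suffix oracle outputs `y`. -/
def SolvesOn (M : BAPO Sigma Out a b) (x : List Sigma) (y : Out) : Prop :=
  ∀ k, k < x.length →
    ∀ G : Finset (Sigma × ℕ), G ⊆ M.cands (x.take k) (x.drop k) →
      G.card = min b (M.cands (x.take k) (x.drop k)).card →
      M.h (M.f (x.take k)) G (x.drop k) k = y

/-- The BAPO outputs a *correct* answer (one satisfying `good`) on input `x`: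
for every split index `k < |x|` and every attended set `G ⊆ 𝔾` with
`|G| = min b |𝔾|`, the suffix oracle's output satisfies `good`. -/
def SolvesOnP (M : BAPO Sigma Out a b) (x : List Sigma) (good : Out → Prop) : Prop :=
  ∀ k, k < x.length →
    ∀ G : Finset (Sigma × ℕ), G ⊆ M.cands (x.take k) (x.drop k) →
      G.card = min b (M.cands (x.take k) (x.drop k)).card →
      good (M.h (M.f (x.take k)) G (x.drop k) k)

end BAPO

/-- A correct answer for `SetDiff` on the instance `c | d`: either `some t` for a
token `t` occurring in `c` but not in `d`, or `none` (the token `∅`) if every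
token of `c` occurs in `d`. -/
def SetDiffGood (k : ℕ) (c d : List (Fin k)) (y : Option (Fin k)) : Prop :=
  (∃ t : Fin k, y = some t ∧ t ∈ c ∧ t ∉ d) ∨
    (y = none ∧ ∀ t ∈ c, t ∈ d)

section SetDiffAux

variable {k : ℕ}

/-- Tokens before the first `none`. -/
def sdBefore (l : List (Option (Fin k))) : List (Option (Fin k)) :=
  l.takeWhile Option.isSome

/-- Tokens after the first `none`. -/
def sdAfter (l : List (Option (Fin k))) : List (Option (Fin k)) :=
  (l.dropWhile Option.isSome).drop 1

lemma sdBefore_append (l : List (Fin k)) (r : List (Option (Fin k))) :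
    sdBefore (l.map some ++ none :: r) = l.map some := by
  induction l with
  | nil => simp [sdBefore, List.takeWhile]
  | cons a l ih => simpa [sdBefore, List.takeWhile] using ih

lemma sdAfter_append (l : List (Fin k)) (r : List (Option (Fin k))) :
    sdAfter (l.map some ++ none :: r) = r := by
  induction l with
  | nil => simp [sdAfter, List.dropWhile]
  | cons a l ih => simpa [sdAfter, List.dropWhile] using ih

lemma sdBefore_map_some (l : List (Fin k)) : sdBefore (l.map some) = l.map some := by
  rw [sdBefore, List.takeWhile_eq_self_iff]; simp

lemma sdAfter_map_some (l : List (Fin k)) : sdAfter (l.map some) = [] := by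
  rw [sdAfter, List.dropWhile_eq_nil_iff.2] <;> simp

/-- The SetDiff BAPO. -/
def sdBAPO (k : ℕ) : BAPO (Option (Fin k)) (Option (Fin k)) k 0 where
  f := fun pre t => decide (some t ∈ sdBefore pre) && !decide (some t ∈ sdAfter pre)
  g := fun _ _ _ _ => false
  h := fun bits _ suf _ =>
    (List.finRange k).find? fun t =>
      (bits t || (decide (none ∈ suf) && decide (some t ∈ sdBefore suf)))
        && !(if none ∈ suf then decide (some t ∈ sdAfter suf) else decide (some t ∈ suf))

end SetDiffAux

/-- **SetDiff has a `(k, 0)`-BAPO.** Over an alphabet of size `k` there exists a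
BAPO with prefix bandwidth `k` bits and attention bandwidth `0` solving `SetDiff`:
the prefix oracle can transmit, for each symbol, whether (as far as the prefix
reveals) it occurs in the first part but not the second, and this lets the suffix
oracle always output a correct answer. Instances `c | d` are encoded over
`Option (Fin k)` with `none` the divider token. -/
lemma sd_mem_map_some {k : ℕ} (t : Fin k) (l : List (Fin k)) :
    some t ∈ l.map some ↔ t ∈ l := by simp

lemma sd_mem_split {k : ℕ} (t : Fin k) (l : List (Fin k)) (i : ℕ) :
    t ∈ l ↔ t ∈ l.take i ∨ t ∈ l.drop i := by
  rw [← List.mem_append, List.take_append_drop]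

theorem setdiff_upper_bound (k : ℕ) :
    ∃ M : BAPO (Option (Fin k)) (Option (Fin k)) k 0,
      ∀ c d : List (Fin k),
        M.SolvesOnP (c.map some ++ [none] ++ d.map some) (SetDiffGood k c d) := by
  refine ⟨sdBAPO k, fun c d => ?_⟩
  intro j hj G hG hcard
  set x := c.map some ++ [none] ++ d.map some with hx
  set P : Fin k → Bool := fun t =>
      ((sdBAPO k).f (x.take j) t ||
        (decide (none ∈ x.drop j) && decide (some t ∈ sdBefore (x.drop j))))
        && !(if none ∈ x.drop j then decide (some t ∈ sdAfter (x.drop j))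
             else decide (some t ∈ x.drop j)) with hP
  have hout : (sdBAPO k).h ((sdBAPO k).f (x.take j)) G (x.drop j) j
      = (List.finRange k).find? P := rfl
  have key : ∀ t : Fin k, P t = true ↔ (t ∈ c ∧ t ∉ d) := by
    intro t
    rcases le_or_gt j (c.length) with h | h
    · -- split inside `c`
      have hjlen : j ≤ (c.map some).length := by simpa using h
      have htake : x.take j = (c.take j).map some := by
        rw [hx, List.append_assoc, List.take_append_of_le_length hjlen, List.map_take]
      have hdrop : x.drop j = (c.drop j).map some ++ none :: d.map some := by
        rw [hx, List.append_assoc, List.drop_append_of_le_length hjlen, List.map_drop]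
        simp
      have hnone : none ∈ (c.drop j).map some ++ none :: d.map some := by simp
      simp only [hP, htake, hdrop, sdBAPO, if_pos hnone, decide_eq_true hnone,
        sdBefore_append, sdAfter_append, sdBefore_map_some, sdAfter_map_some,
        Bool.true_and, Bool.and_eq_true, Bool.or_eq_true, Bool.not_eq_true',
        decide_eq_true_eq, decide_eq_false_iff_not, sd_mem_map_some,
        List.not_mem_nil, not_false_iff, and_true]
      rw [sd_mem_split t c j]
    · -- split inside `d` (or right after the divider)
      have hjlen : (c.map some ++ [none]).length ≤ j := by simpa using h
      obtain ⟨i, rfl⟩ : ∃ i, j = (c.map some ++ [none]).length + i :=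
        ⟨j - (c.map some ++ [none]).length, by omega⟩
      have htake : x.take ((c.map some ++ [none]).length + i)
          = c.map some ++ none :: (d.take i).map some := by
        rw [hx, List.take_length_add_append, List.map_take]; simp
      have hdrop : x.drop ((c.map some ++ [none]).length + i)
          = (d.drop i).map some := by
        rw [hx, List.drop_length_add_append, List.map_drop]
      have hnone : none ∉ (d.drop i).map some := by
        intro hmem
        obtain ⟨a, -, ha⟩ := List.mem_map.1 hmem
        cases ha
      simp only [hP, htake, hdrop, sdBAPO, if_neg hnone, decide_eq_false hnone,
        sdBefore_append, sdAfter_append, Bool.false_and, Bool.or_false,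
        Bool.and_eq_true, Bool.not_eq_true', decide_eq_true_eq,
        decide_eq_false_iff_not, sd_mem_map_some]
      rw [sd_mem_split t d i]
      tauto
  rcases hfind : (List.finRange k).find? P with _ | t
  · rw [hout, hfind]
    refine Or.inr ⟨rfl, fun t ht => ?_⟩
    have := List.find?_eq_none.1 hfind t (List.mem_finRange t)
    by_contra htd
    exact this ((key t).2 ⟨ht, htd⟩)
  · rw [hout, hfind]
    have := List.find?_some hfind
    obtain ⟨h1, h2⟩ := (key t).1 this
    exact Or.inl ⟨t, rfl, h1, h2⟩
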